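/- arXiv:2305.06936 — 6 statements merged into one kernel-verified Lean document; each statement's English description precedes it below -/
import Mathlib

section
/- Performance Difference Lemma for finite-horizon semi-MDPs: Let S, O be finite nonempty sets, H ≥ 2 an integer horizon, and let (r̃, p̃) and (r̂, p̂) be two reward/transition pairs defining two FH-SMDPs on the same S, O, H. Fix a deterministic policy μ and an initial state s₀, and let w be the occupancy measure of μ under p̂ from s₀, and Ṽ^μ, V̂^μ the value functions of μ in the two FH-SMDPs. Then Ṽ^μ(s₀,1) − V̂^μ(s₀,1) = ∑_{h=1}^{H−1} ∑_{s∈S} w(s,h) · [ (r̃(s,μ(s,h),h) − r̂(s,μ(s,h),h)) + ∑_{s'∈S} ∑_{h'=h+1}^{H} (p̃(s',h'|s,μ(s,h),h) − p̂(s',h'|s,μ(s,h),h)) · Ṽ^μ(s',h') ]. -/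
open Finset

/-- **Performance Difference Lemma for finite-horizon semi-MDPs.**
`S` and `O` are the finite nonempty state and option spaces, `H ≥ 2` the horizon.
`(rt, pt)` and `(rh, ph)` are two reward/transition pairs (`pt s' h' s o h` is the
probability of reaching `(s',h')` from `(s,o,h)`).  `μ` is a deterministic policy,
`s₀` the initial state, `w` the occupancy measure of `μ` under `ph` from `s₀`,
and `Vt`, `Vh` the value functions of `μ` in the two FH-SMDPs. -/
theorem performance_difference_lemma_FH_SMDP
    {S O : Type*} [Fintype S] [Fintype O] [Nonempty S] [Nonempty O]
    (H : ℕ) (hH : 2 ≤ H)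
    (rt rh : S → O → ℕ → ℝ)
    (pt ph : S → ℕ → S → O → ℕ → ℝ)
    (hpt_nonneg : ∀ s o h, 1 ≤ h → h < H → ∀ s', ∀ h' ∈ Finset.Icc (h+1) H,
      0 ≤ pt s' h' s o h)
    (hpt_sum : ∀ s o h, 1 ≤ h → h < H →
      ∑ s', ∑ h' ∈ Finset.Icc (h+1) H, pt s' h' s o h = 1)
    (hph_nonneg : ∀ s o h, 1 ≤ h → h < H → ∀ s', ∀ h' ∈ Finset.Icc (h+1) H,
      0 ≤ ph s' h' s o h)
    (hph_sum : ∀ s o h, 1 ≤ h → h < H →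
      ∑ s', ∑ h' ∈ Finset.Icc (h+1) H, ph s' h' s o h = 1)
    (μ : S → ℕ → O) (s₀ : S)
    (w : S → ℕ → ℝ)
    (hw_init : w s₀ 1 = 1)
    (hw_init' : ∀ s, s ≠ s₀ → w s 1 = 0)
    (hw_rec : ∀ s' h', 2 ≤ h' → h' ≤ H →
      w s' h' = ∑ s, ∑ h ∈ Finset.Icc 1 (h'-1), w s h * ph s' h' s (μ s h) h)
    (Vt Vh : S → ℕ → ℝ)
    (hVtH : ∀ s, Vt s H = 0)
    (hVt_rec : ∀ s h, 1 ≤ h → h < H →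
      Vt s h = rt s (μ s h) h
        + ∑ s', ∑ h' ∈ Finset.Icc (h+1) H, pt s' h' s (μ s h) h * Vt s' h')
    (hVhH : ∀ s, Vh s H = 0)
    (hVh_rec : ∀ s h, 1 ≤ h → h < H →
      Vh s h = rh s (μ s h) h
        + ∑ s', ∑ h' ∈ Finset.Icc (h+1) H, ph s' h' s (μ s h) h * Vh s' h') :
    Vt s₀ 1 - Vh s₀ 1 =
      ∑ h ∈ Finset.Icc 1 (H-1), ∑ s, w s h *
        ((rt s (μ s h) h - rh s (μ s h) h)
          + ∑ s', ∑ h' ∈ Finset.Icc (h+1) H,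
              (pt s' h' s (μ s h) h - ph s' h' s (μ s h) h) * Vt s' h') := by

  set D : S → ℕ → ℝ := fun s h => Vt s h - Vh s h with hD
  set G : S → ℕ → ℝ := fun s h =>
    (rt s (μ s h) h - rh s (μ s h) h)
      + ∑ s', ∑ h' ∈ Finset.Icc (h+1) H,
          (pt s' h' s (μ s h) h - ph s' h' s (μ s h) h) * Vt s' h' with hG
  set g : ℕ → ℕ → ℝ := fun h h' =>
    ∑ s', (∑ s, w s h * ph s' h' s (μ s h) h) * D s' h' with hg
  -- Step A: pointwise decomposition
  have stepA : ∀ h, 1 ≤ h → h < H →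
      ∑ s, w s h * D s h
        = (∑ s, w s h * G s h) + ∑ h' ∈ Finset.Icc (h+1) H, g h h' := by
    intro h h1 h2
    have point : ∀ s, D s h = G s h
        + ∑ s', ∑ h' ∈ Finset.Icc (h+1) H, ph s' h' s (μ s h) h * D s' h' := by
      intro s
      have hcomb :
          (∑ s', ∑ h' ∈ Finset.Icc (h+1) H,
              (pt s' h' s (μ s h) h - ph s' h' s (μ s h) h) * Vt s' h')
          + (∑ s', ∑ h' ∈ Finset.Icc (h+1) H, ph s' h' s (μ s h) h * D s' h')
          = (∑ s', ∑ h' ∈ Finset.Icc (h+1) H, pt s' h' s (μ s h) h * Vt s' h')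
            - (∑ s', ∑ h' ∈ Finset.Icc (h+1) H, ph s' h' s (μ s h) h * Vh s' h') := by
        rw [← Finset.sum_sub_distrib, ← Finset.sum_add_distrib]
        refine Finset.sum_congr rfl fun s' _ => ?_
        rw [← Finset.sum_sub_distrib, ← Finset.sum_add_distrib]
        refine Finset.sum_congr rfl fun h' _ => ?_
        simp only [hD]; ring
      simp only [hD, hG]
      rw [hVt_rec s h h1 h2, hVh_rec s h h1 h2]
      have := hcomb
      simp only [hD] at this
      linarith
    calc ∑ s, w s h * D s h
        = ∑ s, (w s h * G s h
            + ∑ s', ∑ h' ∈ Finset.Icc (h+1) H,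
                w s h * (ph s' h' s (μ s h) h * D s' h')) := by
          refine Finset.sum_congr rfl fun s _ => ?_
          rw [point s, mul_add, Finset.mul_sum]
          congr 1
          exact Finset.sum_congr rfl fun s' _ => by rw [Finset.mul_sum]
      _ = (∑ s, w s h * G s h)
          + ∑ s, ∑ s', ∑ h' ∈ Finset.Icc (h+1) H,
              w s h * (ph s' h' s (μ s h) h * D s' h') := by
          rw [Finset.sum_add_distrib]
      _ = (∑ s, w s h * G s h) + ∑ h' ∈ Finset.Icc (h+1) H, g h h' := by
          congr 1
          rw [Finset.sum_comm]
          calc ∑ s', ∑ s, ∑ h' ∈ Finset.Icc (h+1) H,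
                  w s h * (ph s' h' s (μ s h) h * D s' h')
              = ∑ s', ∑ h' ∈ Finset.Icc (h+1) H, ∑ s,
                  w s h * (ph s' h' s (μ s h) h * D s' h') := by
                exact Finset.sum_congr rfl fun s' _ => Finset.sum_comm
            _ = ∑ h' ∈ Finset.Icc (h+1) H, ∑ s', ∑ s,
                  w s h * (ph s' h' s (μ s h) h * D s' h') := Finset.sum_comm
            _ = ∑ h' ∈ Finset.Icc (h+1) H, g h h' := by
                refine Finset.sum_congr rfl fun h' _ => ?_
                simp only [hg]
                refine Finset.sum_congr rfl fun s' _ => ?_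
                rw [Finset.sum_mul]
                exact Finset.sum_congr rfl fun s _ => by ring
  -- Step C: swap the double sum
  have stepC : ∑ h ∈ Finset.Icc 1 (H-1), ∑ h' ∈ Finset.Icc (h+1) H, g h h'
      = ∑ h' ∈ Finset.Icc 2 H, ∑ h ∈ Finset.Icc 1 (h'-1), g h h' := by
    have e1 : ∀ h : ℕ, ∑ h' ∈ Finset.Icc (h+1) H, g h h'
        = ∑ h' ∈ Finset.Icc 1 H, if h + 1 ≤ h' then g h h' else 0 := by
      intro h
      rw [← Finset.sum_filter]
      congr 1
      ext h'
      simp only [Finset.mem_filter, Finset.mem_Icc]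
      omega
    calc ∑ h ∈ Finset.Icc 1 (H-1), ∑ h' ∈ Finset.Icc (h+1) H, g h h'
        = ∑ h ∈ Finset.Icc 1 H, ∑ h' ∈ Finset.Icc 1 H,
            if h + 1 ≤ h' then g h h' else 0 := by
          rw [Finset.sum_subset ((Finset.Icc_subset_Icc_right (Nat.sub_le H 1)))]
          · exact Finset.sum_congr rfl fun h _ => e1 h
          · intro x hx hx'
            simp only [Finset.mem_Icc] at hx hx'
            have hxH : x = H := by omega
            refine Finset.sum_eq_zero fun h' hh' => ?_
            simp only [Finset.mem_Icc] at hh'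
            exact absurd hh' (by omega)
      _ = ∑ h' ∈ Finset.Icc 1 H, ∑ h ∈ Finset.Icc 1 H,
            if h + 1 ≤ h' then g h h' else 0 := Finset.sum_comm
      _ = ∑ h' ∈ Finset.Icc 2 H, ∑ h ∈ Finset.Icc 1 (h'-1), g h h' := by
          rw [← Finset.sum_subset ((Finset.Icc_subset_Icc_left (by norm_num : (1:ℕ) ≤ 2)))]
          · refine Finset.sum_congr rfl fun h' hh' => ?_
            simp only [Finset.mem_Icc] at hh'
            rw [← Finset.sum_filter]
            congr 1
            ext h
            simp only [Finset.mem_filter, Finset.mem_Icc]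
            omega
          · intro x hx hx'
            simp only [Finset.mem_Icc] at hx hx'
            have hx1 : x = 1 := by omega
            refine Finset.sum_eq_zero fun h hh => ?_
            simp only [Finset.mem_Icc] at hh
            rw [if_neg (by omega)]
  -- Step B: use occupancy recursion
  have stepB : ∀ h' ∈ Finset.Icc 2 H,
      ∑ h ∈ Finset.Icc 1 (h'-1), g h h' = ∑ s', w s' h' * D s' h' := by
    intro h' hh'
    simp only [Finset.mem_Icc] at hh'
    simp only [hg]
    rw [Finset.sum_comm]
    refine Finset.sum_congr rfl fun s' _ => ?_
    rw [← Finset.sum_mul]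
    congr 1
    rw [hw_rec s' h' hh'.1 hh'.2, Finset.sum_comm]
  -- combine
  have main : ∑ h ∈ Finset.Icc 1 (H-1), ∑ s, w s h * D s h
      = (∑ h ∈ Finset.Icc 1 (H-1), ∑ s, w s h * G s h)
        + ∑ h' ∈ Finset.Icc 2 H, ∑ s, w s h' * D s h' := by
    calc ∑ h ∈ Finset.Icc 1 (H-1), ∑ s, w s h * D s h
        = ∑ h ∈ Finset.Icc 1 (H-1), ((∑ s, w s h * G s h)
            + ∑ h' ∈ Finset.Icc (h+1) H, g h h') := by
          refine Finset.sum_congr rfl fun h hh => ?_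
          simp only [Finset.mem_Icc] at hh
          exact stepA h hh.1 (by omega)
      _ = (∑ h ∈ Finset.Icc 1 (H-1), ∑ s, w s h * G s h)
          + ∑ h ∈ Finset.Icc 1 (H-1), ∑ h' ∈ Finset.Icc (h+1) H, g h h' := by
          rw [Finset.sum_add_distrib]
      _ = (∑ h ∈ Finset.Icc 1 (H-1), ∑ s, w s h * G s h)
          + ∑ h' ∈ Finset.Icc 2 H, ∑ s, w s h' * D s h' := by
          rw [stepC]
          congr 1
          exact Finset.sum_congr rfl stepB
  -- split off endpoints
  set f : ℕ → ℝ := fun h => ∑ s, w s h * D s h with hf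
  have split1 : ∑ h ∈ Finset.Icc 1 (H-1), f h
      = f 1 + ∑ h ∈ Finset.Icc 2 (H-1), f h := by
    have h1 : Finset.Icc 1 (H-1) = insert 1 (Finset.Icc 2 (H-1)) := by
      ext x
      simp only [Finset.mem_insert, Finset.mem_Icc]
      omega
    rw [h1, Finset.sum_insert (by simp)]
  have split2 : ∑ h ∈ Finset.Icc 2 H, f h
      = (∑ h ∈ Finset.Icc 2 (H-1), f h) + f H := by
    have h1 : Finset.Icc 2 H = insert H (Finset.Icc 2 (H-1)) := by
      ext x
      simp only [Finset.mem_insert, Finset.mem_Icc]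
      omega
    rw [h1, Finset.sum_insert (by simp only [Finset.mem_Icc]; omega), add_comm]
  have fH : f H = 0 := by
    simp only [hf, hD]
    refine Finset.sum_eq_zero fun s _ => ?_
    rw [hVtH s, hVhH s]
    ring
  have f1 : f 1 = Vt s₀ 1 - Vh s₀ 1 := by
    simp only [hf, hD]
    rw [Finset.sum_eq_single s₀]
    · rw [hw_init]; ring
    · intro s _ hs
      rw [hw_init' s hs]; ring
    · intro hs; exact absurd (Finset.mem_univ s₀) hs
  have final : Vt s₀ 1 - Vh s₀ 1
      = ∑ h ∈ Finset.Icc 1 (H-1), ∑ s, w s h * G s h := by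
    have := main
    rw [split1, split2, fH, f1] at this
    linarith
  exact final
end

section
/- Confidence-width bound on the value difference: Let S, O be finite nonempty sets, H ≥ 2 an integer horizon, and let (r̃, p̃) and (r̂, p̂) be two reward/transition pairs defining two FH-SMDPs on the same S, O, H. Fix a deterministic policy μ, an initial state s₀, let w be the occupancy measure of μ under p̂ from s₀, and Ṽ^μ the value function of μ under (r̃, p̃). Suppose there are functions β^r, β^p ≥ 0 such that for all (s,o,h) with h < H: |r̃(s,o,h) − r̂(s,o,h)| ≤ β^r(s,o,h) and ∑_{s'∈S} ∑_{h'=h+1}^{H} |p̃(s',h'|s,o,h) − p̂(s',h'|s,o,h)| ≤ β^p(s,o,h), and suppose 0 ≤ Ṽ^μ(s,h) ≤ H for all (s,h). Then Ṽ^μ(s₀,1) − V̂^μ(s₀,1) ≤ ∑_{h=1}^{H−1} ∑_{s∈S} w(s,h) · ( β^r(s,μ(s,h),h) + H · β^p(s,μ(s,h),h) ). -/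
open Finset

private lemma sum_Icc_swap_aux (H : ℕ) (f : ℕ → ℕ → ℝ) :
    ∑ h ∈ Finset.Icc 1 (H-1), ∑ h' ∈ Finset.Icc (h+1) H, f h h'
      = ∑ h' ∈ Finset.Icc 2 H, ∑ h ∈ Finset.Icc 1 (h'-1), f h h' := by
  have inner₁ : ∀ h : ℕ, (∑ h' ∈ Finset.Icc 1 H, if h < h' then f h h' else 0)
      = ∑ h' ∈ Finset.Icc (h+1) H, f h h' := by
    intro h
    rw [← Finset.sum_filter]
    apply Finset.sum_congr _ (fun _ _ => rfl)
    ext h'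
    simp only [Finset.mem_filter, Finset.mem_Icc]
    omega
  have inner₂ : ∀ h' : ℕ, h' ≤ H → (∑ h ∈ Finset.Icc 1 H, if h < h' then f h h' else 0)
      = ∑ h ∈ Finset.Icc 1 (h'-1), f h h' := by
    intro h' hh'
    rw [← Finset.sum_filter]
    apply Finset.sum_congr _ (fun _ _ => rfl)
    ext h
    simp only [Finset.mem_filter, Finset.mem_Icc]
    omega
  have L : ∑ h ∈ Finset.Icc 1 (H-1), ∑ h' ∈ Finset.Icc (h+1) H, f h h'
      = ∑ h ∈ Finset.Icc 1 H, ∑ h' ∈ Finset.Icc 1 H, if h < h' then f h h' else 0 := by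
    calc ∑ h ∈ Finset.Icc 1 (H-1), ∑ h' ∈ Finset.Icc (h+1) H, f h h'
        = ∑ h ∈ Finset.Icc 1 (H-1), ∑ h' ∈ Finset.Icc 1 H, if h < h' then f h h' else 0 :=
          Finset.sum_congr rfl fun h _ => (inner₁ h).symm
      _ = ∑ h ∈ Finset.Icc 1 H, ∑ h' ∈ Finset.Icc 1 H, if h < h' then f h h' else 0 := by
          apply Finset.sum_subset (Finset.Icc_subset_Icc_right (Nat.sub_le H 1))
          intro h hm hn
          simp only [Finset.mem_Icc] at hm hn
          apply Finset.sum_eq_zero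
          intro h' hh'
          simp only [Finset.mem_Icc] at hh'
          rw [if_neg (by omega)]
  have R : ∑ h' ∈ Finset.Icc 2 H, ∑ h ∈ Finset.Icc 1 (h'-1), f h h'
      = ∑ h' ∈ Finset.Icc 1 H, ∑ h ∈ Finset.Icc 1 H, if h < h' then f h h' else 0 := by
    calc ∑ h' ∈ Finset.Icc 2 H, ∑ h ∈ Finset.Icc 1 (h'-1), f h h'
        = ∑ h' ∈ Finset.Icc 1 H, ∑ h ∈ Finset.Icc 1 (h'-1), f h h' := by
          apply Finset.sum_subset (Finset.Icc_subset_Icc_left (by omega : (1:ℕ) ≤ 2))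
          intro h' hm hn
          simp only [Finset.mem_Icc] at hm hn
          have : h' - 1 = 0 := by omega
          rw [this]
          simp
      _ = ∑ h' ∈ Finset.Icc 1 H, ∑ h ∈ Finset.Icc 1 H, if h < h' then f h h' else 0 := by
          apply Finset.sum_congr rfl
          intro h' hh'
          simp only [Finset.mem_Icc] at hh'
          exact (inner₂ h' hh'.2).symm
  rw [L, R, Finset.sum_comm]

private lemma quad_swap_aux {S : Type*} [Fintype S] (H : ℕ) (t : ℕ → S → S → ℕ → ℝ) :
    ∑ h ∈ Finset.Icc 1 (H-1), ∑ s : S, ∑ s' : S, ∑ h' ∈ Finset.Icc (h+1) H, t h s s' h'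
      = ∑ h' ∈ Finset.Icc 2 H, ∑ s' : S, ∑ s : S, ∑ h ∈ Finset.Icc 1 (h'-1), t h s s' h' := by
  have step1 : ∀ h, (∑ s : S, ∑ s' : S, ∑ h' ∈ Finset.Icc (h+1) H, t h s s' h')
      = ∑ h' ∈ Finset.Icc (h+1) H, ∑ s' : S, ∑ s : S, t h s s' h' :=
    fun h =>
      calc ∑ s : S, ∑ s' : S, ∑ h' ∈ Finset.Icc (h+1) H, t h s s' h'
          = ∑ s : S, ∑ h' ∈ Finset.Icc (h+1) H, ∑ s' : S, t h s s' h' :=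
            Finset.sum_congr rfl fun s _ => Finset.sum_comm
        _ = ∑ h' ∈ Finset.Icc (h+1) H, ∑ s : S, ∑ s' : S, t h s s' h' := Finset.sum_comm
        _ = ∑ h' ∈ Finset.Icc (h+1) H, ∑ s' : S, ∑ s : S, t h s s' h' :=
            Finset.sum_congr rfl fun h' _ => Finset.sum_comm
  calc ∑ h ∈ Finset.Icc 1 (H-1), ∑ s : S, ∑ s' : S, ∑ h' ∈ Finset.Icc (h+1) H, t h s s' h'
      = ∑ h ∈ Finset.Icc 1 (H-1), ∑ h' ∈ Finset.Icc (h+1) H, ∑ s' : S, ∑ s : S, t h s s' h' :=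
        Finset.sum_congr rfl fun h _ => step1 h
    _ = ∑ h' ∈ Finset.Icc 2 H, ∑ h ∈ Finset.Icc 1 (h'-1), ∑ s' : S, ∑ s : S, t h s s' h' :=
        sum_Icc_swap_aux H _
    _ = ∑ h' ∈ Finset.Icc 2 H, ∑ s' : S, ∑ h ∈ Finset.Icc 1 (h'-1), ∑ s : S, t h s s' h' :=
        Finset.sum_congr rfl fun h' _ => Finset.sum_comm
    _ = ∑ h' ∈ Finset.Icc 2 H, ∑ s' : S, ∑ s : S, ∑ h ∈ Finset.Icc 1 (h'-1), t h s s' h' :=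
        Finset.sum_congr rfl fun h' _ => Finset.sum_congr rfl fun s' _ => Finset.sum_comm


/-- **Confidence-width bound on the value difference** in finite-horizon semi-MDPs.
`(rt, pt)` and `(rh, ph)` are two reward/transition pairs, `μ` a deterministic policy,
`s₀` an initial state, `w` the occupancy measure of `μ` under `ph` from `s₀`,
`Vt`/`Vh` the value functions of `μ` under `(rt,pt)`/`(rh,ph)`; `βr`, `βp` are
nonnegative confidence widths dominating the reward gap and the ℓ¹ transition gap. -/
theorem confidence_width_value_difference_FH_SMDP
    {S O : Type*} [Fintype S] [Fintype O] [Nonempty S] [Nonempty O]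
    (H : ℕ) (hH : 2 ≤ H)
    (rt rh : S → O → ℕ → ℝ)
    (pt ph : S → ℕ → S → O → ℕ → ℝ)
    (hpt_nonneg : ∀ s o h, 1 ≤ h → h < H → ∀ s', ∀ h' ∈ Finset.Icc (h+1) H,
      0 ≤ pt s' h' s o h)
    (hpt_sum : ∀ s o h, 1 ≤ h → h < H →
      ∑ s', ∑ h' ∈ Finset.Icc (h+1) H, pt s' h' s o h = 1)
    (hph_nonneg : ∀ s o h, 1 ≤ h → h < H → ∀ s', ∀ h' ∈ Finset.Icc (h+1) H,
      0 ≤ ph s' h' s o h)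
    (hph_sum : ∀ s o h, 1 ≤ h → h < H →
      ∑ s', ∑ h' ∈ Finset.Icc (h+1) H, ph s' h' s o h = 1)
    (μ : S → ℕ → O) (s₀ : S)
    (w : S → ℕ → ℝ)
    (hw_init : w s₀ 1 = 1)
    (hw_init' : ∀ s, s ≠ s₀ → w s 1 = 0)
    (hw_rec : ∀ s' h', 2 ≤ h' → h' ≤ H →
      w s' h' = ∑ s, ∑ h ∈ Finset.Icc 1 (h'-1), w s h * ph s' h' s (μ s h) h)
    (Vt Vh : S → ℕ → ℝ)
    (hVtH : ∀ s, Vt s H = 0)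
    (hVt_rec : ∀ s h, 1 ≤ h → h < H →
      Vt s h = rt s (μ s h) h
        + ∑ s', ∑ h' ∈ Finset.Icc (h+1) H, pt s' h' s (μ s h) h * Vt s' h')
    (hVhH : ∀ s, Vh s H = 0)
    (hVh_rec : ∀ s h, 1 ≤ h → h < H →
      Vh s h = rh s (μ s h) h
        + ∑ s', ∑ h' ∈ Finset.Icc (h+1) H, ph s' h' s (μ s h) h * Vh s' h')
    (βr βp : S → O → ℕ → ℝ)
    (hβr_nonneg : ∀ s o h, 1 ≤ h → h < H → 0 ≤ βr s o h)
    (hβp_nonneg : ∀ s o h, 1 ≤ h → h < H → 0 ≤ βp s o h)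
    (hβr : ∀ s o h, 1 ≤ h → h < H → |rt s o h - rh s o h| ≤ βr s o h)
    (hβp : ∀ s o h, 1 ≤ h → h < H →
      ∑ s', ∑ h' ∈ Finset.Icc (h+1) H, |pt s' h' s o h - ph s' h' s o h|
        ≤ βp s o h)
    (hVt_bound : ∀ s h, 1 ≤ h → h ≤ H → 0 ≤ Vt s h ∧ Vt s h ≤ (H : ℝ)) :
    Vt s₀ 1 - Vh s₀ 1 ≤
      ∑ h ∈ Finset.Icc 1 (H-1), ∑ s, w s h *
        (βr s (μ s h) h + (H : ℝ) * βp s (μ s h) h) := by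
  -- notation
  have hH1 : 1 ≤ H - 1 := by omega
  -- nonnegativity of the occupancy measure
  have hw_nonneg : ∀ h, 1 ≤ h → h ≤ H → ∀ s, 0 ≤ w s h := by
    intro h
    induction h using Nat.strong_induction_on with
    | _ h ih =>
      intro h1 hhH s
      rcases eq_or_lt_of_le h1 with h1' | h2
      · rcases eq_or_ne s s₀ with rfl | hs
        · rw [← h1', hw_init]; norm_num
        · rw [← h1', hw_init' s hs]
      · rw [hw_rec s h h2 hhH]
        apply Finset.sum_nonneg
        intro s'' _
        apply Finset.sum_nonneg
        intro h'' hm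
        simp only [Finset.mem_Icc] at hm
        have hlt : h'' < h := by omega
        refine mul_nonneg (ih h'' hlt hm.1 (by omega) s'') ?_
        exact hph_nonneg s'' (μ s'' h'') h'' hm.1 (by omega) s h
          (Finset.mem_Icc.mpr ⟨by omega, hhH⟩)
  -- error function g
  set g : S → ℕ → ℝ := fun s h =>
    rt s (μ s h) h - rh s (μ s h) h
      + ∑ s', ∑ h' ∈ Finset.Icc (h+1) H,
          (pt s' h' s (μ s h) h - ph s' h' s (μ s h) h) * Vt s' h' with hg
  -- one-step error decomposition
  have hD_rec : ∀ s h, 1 ≤ h → h < H →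
      w s h * (Vt s h - Vh s h)
        = w s h * g s h
          + ∑ s', ∑ h' ∈ Finset.Icc (h+1) H,
              (w s h * ph s' h' s (μ s h) h) * (Vt s' h' - Vh s' h') := by
    intro s h h1 h2
    rw [hVt_rec s h h1 h2, hVh_rec s h h1 h2, hg]
    simp only [mul_sub, sub_mul, Finset.sum_sub_distrib, Finset.mul_sum]
    ring_nf
    simp only [Finset.sum_sub_distrib, Finset.mul_sum]
    ring
  -- total error sum
  have hT : ∑ h ∈ Finset.Icc 1 (H-1), ∑ s, w s h * (Vt s h - Vh s h)
      = (∑ h ∈ Finset.Icc 1 (H-1), ∑ s, w s h * g s h)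
        + ∑ h ∈ Finset.Icc 1 (H-1), ∑ s, ∑ s', ∑ h' ∈ Finset.Icc (h+1) H,
            (w s h * ph s' h' s (μ s h) h) * (Vt s' h' - Vh s' h') := by
    rw [← Finset.sum_add_distrib]
    apply Finset.sum_congr rfl
    intro h hm
    simp only [Finset.mem_Icc] at hm
    rw [← Finset.sum_add_distrib]
    exact Finset.sum_congr rfl fun s _ => hD_rec s h hm.1 (by omega)
  -- evaluate the quadruple sum via occupancy recursion
  have hA : ∑ h ∈ Finset.Icc 1 (H-1), ∑ s, ∑ s', ∑ h' ∈ Finset.Icc (h+1) H,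
        (w s h * ph s' h' s (μ s h) h) * (Vt s' h' - Vh s' h')
      = ∑ h' ∈ Finset.Icc 2 H, ∑ s', w s' h' * (Vt s' h' - Vh s' h') := by
    rw [quad_swap_aux H (fun h s s' h' =>
      (w s h * ph s' h' s (μ s h) h) * (Vt s' h' - Vh s' h'))]
    apply Finset.sum_congr rfl
    intro h' hm
    simp only [Finset.mem_Icc] at hm
    apply Finset.sum_congr rfl
    intro s' _
    rw [hw_rec s' h' hm.1 hm.2]
    rw [Finset.sum_mul]
    apply Finset.sum_congr rfl
    intro s _
    rw [Finset.sum_mul]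
  -- drop the zero top term and split off h = 1
  have hA2 : ∑ h' ∈ Finset.Icc 2 H, ∑ s', w s' h' * (Vt s' h' - Vh s' h')
      = ∑ h' ∈ Finset.Icc 2 (H-1), ∑ s', w s' h' * (Vt s' h' - Vh s' h') := by
    have hsplit : Finset.Icc 2 H = insert H (Finset.Icc 2 (H-1)) := by
      ext x; simp only [Finset.mem_Icc, Finset.mem_insert]; omega
    rw [hsplit, Finset.sum_insert (by simp only [Finset.mem_Icc]; omega)]
    have : ∑ s', w s' H * (Vt s' H - Vh s' H) = 0 := by
      apply Finset.sum_eq_zero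
      intro s' _
      rw [hVtH, hVhH]
      ring
    rw [this, zero_add]
  have hsplit1 : ∑ h ∈ Finset.Icc 1 (H-1), ∑ s, w s h * (Vt s h - Vh s h)
      = (∑ s, w s 1 * (Vt s 1 - Vh s 1))
        + ∑ h ∈ Finset.Icc 2 (H-1), ∑ s, w s h * (Vt s h - Vh s h) := by
    have hsplit : Finset.Icc 1 (H-1) = insert 1 (Finset.Icc 2 (H-1)) := by
      ext x; simp only [Finset.mem_Icc, Finset.mem_insert]; omega
    rw [hsplit, Finset.sum_insert (by simp only [Finset.mem_Icc]; omega)]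
  -- the simulation identity at the initial stage
  have hfirst : ∑ s, w s 1 * (Vt s 1 - Vh s 1)
      = ∑ h ∈ Finset.Icc 1 (H-1), ∑ s, w s h * g s h := by
    have := hT
    rw [hA, hA2, hsplit1] at this
    linarith
  have hinit : ∑ s, w s 1 * (Vt s 1 - Vh s 1) = Vt s₀ 1 - Vh s₀ 1 := by
    rw [Finset.sum_eq_single s₀
      (fun s _ hs => by rw [hw_init' s hs, zero_mul])
      (fun h => absurd (Finset.mem_univ s₀) h), hw_init, one_mul]
  -- bound g pointwise
  have hg_bound : ∀ s h, 1 ≤ h → h < H →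
      g s h ≤ βr s (μ s h) h + (H : ℝ) * βp s (μ s h) h := by
    intro s h h1 h2
    simp only [hg]
    have hr : rt s (μ s h) h - rh s (μ s h) h ≤ βr s (μ s h) h :=
      le_trans (le_abs_self _) (hβr s (μ s h) h h1 h2)
    have hp : (∑ s', ∑ h' ∈ Finset.Icc (h+1) H,
        (pt s' h' s (μ s h) h - ph s' h' s (μ s h) h) * Vt s' h')
        ≤ (H : ℝ) * βp s (μ s h) h := by
      calc ∑ s', ∑ h' ∈ Finset.Icc (h+1) H,
            (pt s' h' s (μ s h) h - ph s' h' s (μ s h) h) * Vt s' h'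
          ≤ ∑ s', ∑ h' ∈ Finset.Icc (h+1) H,
            |pt s' h' s (μ s h) h - ph s' h' s (μ s h) h| * (H : ℝ) := by
            apply Finset.sum_le_sum
            intro s' _
            apply Finset.sum_le_sum
            intro h' hm
            simp only [Finset.mem_Icc] at hm
            have hb := hVt_bound s' h' (by omega) hm.2
            calc (pt s' h' s (μ s h) h - ph s' h' s (μ s h) h) * Vt s' h'
                ≤ |pt s' h' s (μ s h) h - ph s' h' s (μ s h) h| * Vt s' h' :=
                  mul_le_mul_of_nonneg_right (le_abs_self _) hb.1
              _ ≤ |pt s' h' s (μ s h) h - ph s' h' s (μ s h) h| * (H : ℝ) :=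
                  mul_le_mul_of_nonneg_left hb.2 (abs_nonneg _)
        _ = (∑ s', ∑ h' ∈ Finset.Icc (h+1) H,
              |pt s' h' s (μ s h) h - ph s' h' s (μ s h) h|) * (H : ℝ) := by
            rw [Finset.sum_mul]
            exact Finset.sum_congr rfl fun s' _ => (Finset.sum_mul _ _ _).symm
        _ ≤ βp s (μ s h) h * (H : ℝ) :=
            mul_le_mul_of_nonneg_right (hβp s (μ s h) h h1 h2) (by positivity)
        _ = (H : ℝ) * βp s (μ s h) h := mul_comm _ _
    linarith
  -- conclude
  rw [← hinit, hfirst]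
  apply Finset.sum_le_sum
  intro h hm
  simp only [Finset.mem_Icc] at hm
  apply Finset.sum_le_sum
  intro s _
  exact mul_le_mul_of_nonneg_left (hg_bound s h hm.1 (by omega))
    (hw_nonneg h hm.1 (by omega) s)
end

section
/- Optimism of extended value iteration for FH-SMDPs: Let (S, O, p, r, H) be an FH-SMDP such that for all (s,o,h) with h < H, 0 ≤ r(s,o,h) ≤ ∑_{s'∈S} ∑_{h'=h+1}^{H} p(s',h'|s,o,h)·(h'−h). For each (s,o,h) with h < H, let B^r(s,o,h) ⊆ ℝ be a nonempty set bounded above with r(s,o,h) ∈ B^r(s,o,h), and let B^p(s,o,h) be a nonempty set of probability vectors on S × {h+1,…,H} with p(·,·|s,o,h) ∈ B^p(s,o,h). Define the optimistic value function Ṽ by Ṽ(s,H) = 0 and, for h < H, Ṽ(s,h) = min{ H − h, max_{o∈O} ( sup_{r'∈B^r(s,o,h)} r' + sup_{p'∈B^p(s,o,h)} ∑_{s'∈S} ∑_{h'=h+1}^{H} p'(s',h')·Ṽ(s',h') ) }. Then for every deterministic policy μ and every state s and stage h ∈ {1,…,H}, Ṽ(s,h) ≥ V^μ(s,h). -/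
open Finset

/-- **Optimism of extended value iteration for FH-SMDPs.**
`(S, O, p, r, H)` is an FH-SMDP whose expected reward is at most the expected option
duration.  `Br s o h ⊆ ℝ` is a nonempty set bounded above containing `r s o h`, and
`Bp s o h` is a nonempty set of probability vectors on `S × {h+1,…,H}` containing
`p (·,·|s,o,h)`.  The optimistic value function `Vt` is defined by
`Vt s H = 0` and, for `h < H`,
`Vt s h = min (H−h) (⨆ o, sSup (Br s o h) + sSup of optimistic next-step values)`.
Then `Vt` dominates the value function `V` of every deterministic policy `μ`. -/
theorem optimism_extended_value_iteration_FH_SMDP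
    {S O : Type*} [Fintype S] [Fintype O] [Nonempty S] [Nonempty O]
    (H : ℕ) (hH : 2 ≤ H)
    (r : S → O → ℕ → ℝ)
    (p : S → ℕ → S → O → ℕ → ℝ)
    (hp_nonneg : ∀ s o h, 1 ≤ h → h < H → ∀ s', ∀ h' ∈ Finset.Icc (h+1) H,
      0 ≤ p s' h' s o h)
    (hp_sum : ∀ s o h, 1 ≤ h → h < H →
      ∑ s', ∑ h' ∈ Finset.Icc (h+1) H, p s' h' s o h = 1)
    (hr : ∀ s o h, 1 ≤ h → h < H →
      0 ≤ r s o h ∧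
      r s o h ≤ ∑ s', ∑ h' ∈ Finset.Icc (h+1) H,
        p s' h' s o h * ((h' : ℝ) - (h : ℝ)))
    (Br : S → O → ℕ → Set ℝ)
    (hBr_ne : ∀ s o h, 1 ≤ h → h < H → (Br s o h).Nonempty)
    (hBr_bdd : ∀ s o h, 1 ≤ h → h < H → BddAbove (Br s o h))
    (hBr_mem : ∀ s o h, 1 ≤ h → h < H → r s o h ∈ Br s o h)
    (Bp : S → O → ℕ → Set (S → ℕ → ℝ))
    (hBp_ne : ∀ s o h, 1 ≤ h → h < H → (Bp s o h).Nonempty)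
    (hBp_prob : ∀ s o h, 1 ≤ h → h < H → ∀ q ∈ Bp s o h,
      (∀ s', ∀ h' ∈ Finset.Icc (h+1) H, 0 ≤ q s' h') ∧
      ∑ s', ∑ h' ∈ Finset.Icc (h+1) H, q s' h' = 1)
    (hBp_mem : ∀ s o h, 1 ≤ h → h < H →
      (fun s' h' => p s' h' s o h) ∈ Bp s o h)
    (Vt : S → ℕ → ℝ)
    (hVtH : ∀ s, Vt s H = 0)
    (hVt_rec : ∀ s h, 1 ≤ h → h < H →
      Vt s h = min ((H : ℝ) - (h : ℝ))
        (⨆ o : O, (sSup (Br s o h)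
          + sSup ((fun q : S → ℕ → ℝ =>
              ∑ s', ∑ h' ∈ Finset.Icc (h+1) H, q s' h' * Vt s' h') '' Bp s o h))))
    (μ : S → ℕ → O)
    (V : S → ℕ → ℝ)
    (hVH : ∀ s, V s H = 0)
    (hV_rec : ∀ s h, 1 ≤ h → h < H →
      V s h = r s (μ s h) h
        + ∑ s', ∑ h' ∈ Finset.Icc (h+1) H, p s' h' s (μ s h) h * V s' h') :
    ∀ s h, 1 ≤ h → h ≤ H → V s h ≤ Vt s h := by

  -- upper bound on Vt
  have hVt_ub : ∀ s h', 1 ≤ h' → h' ≤ H → Vt s h' ≤ (H : ℝ) - (h' : ℝ) := by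
    intro s h' h1 hle
    rcases eq_or_lt_of_le hle with heq | hlt
    · subst heq; rw [hVtH]; simp
    · rw [hVt_rec s h' h1 hlt]; exact min_le_left _ _
  have key : ∀ n : ℕ, ∀ h s, 1 ≤ h → h ≤ H → H - h ≤ n →
      V s h ≤ Vt s h ∧ V s h ≤ (H : ℝ) - (h : ℝ) := by
    intro n
    induction n with
    | zero =>
      intro h s h1 hle hn
      have : h = H := le_antisymm hle (by omega)
      subst this
      rw [hVH, hVtH]
      constructor <;> simp
    | succ n ih =>
      intro h s h1 hle hn
      rcases eq_or_lt_of_le hle with heq | hlt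
      · subst heq; rw [hVH, hVtH]; constructor <;> simp
      set o := μ s h with ho
      have hmem : ∀ h' ∈ Finset.Icc (h+1) H, 1 ≤ h' ∧ h' ≤ H ∧ H - h' ≤ n := by
        intro h' hh'; rw [Finset.mem_Icc] at hh'; omega
      -- V s h ≤ H - h
      have hVub : V s h ≤ (H : ℝ) - (h : ℝ) := by
        rw [hV_rec s h h1 hlt]
        have h2 : ∑ s', ∑ h' ∈ Finset.Icc (h+1) H, p s' h' s o h * V s' h'
            ≤ ∑ s', ∑ h' ∈ Finset.Icc (h+1) H, p s' h' s o h * ((H : ℝ) - (h' : ℝ)) := by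
          refine Finset.sum_le_sum fun s' _ => Finset.sum_le_sum fun h' hh' => ?_
          obtain ⟨hA, hB, hC⟩ := hmem h' hh'
          exact mul_le_mul_of_nonneg_left ((ih h' s' hA hB hC).2)
            (hp_nonneg s o h h1 hlt s' h' hh')
        have h3 := (hr s o h h1 hlt).2
        calc r s o h + ∑ s', ∑ h' ∈ Finset.Icc (h+1) H, p s' h' s o h * V s' h'
            ≤ (∑ s', ∑ h' ∈ Finset.Icc (h+1) H, p s' h' s o h * ((h' : ℝ) - (h : ℝ)))
              + ∑ s', ∑ h' ∈ Finset.Icc (h+1) H, p s' h' s o h * ((H : ℝ) - (h' : ℝ)) :=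
              add_le_add h3 h2
          _ = ∑ s', ∑ h' ∈ Finset.Icc (h+1) H, p s' h' s o h * ((H : ℝ) - (h : ℝ)) := by
              rw [← Finset.sum_add_distrib]
              refine Finset.sum_congr rfl fun s' _ => ?_
              rw [← Finset.sum_add_distrib]
              refine Finset.sum_congr rfl fun h' _ => ?_
              ring
          _ = ((H : ℝ) - (h : ℝ)) * ∑ s', ∑ h' ∈ Finset.Icc (h+1) H, p s' h' s o h := by
              rw [Finset.mul_sum]
              refine Finset.sum_congr rfl fun s' _ => ?_
              rw [Finset.mul_sum]
              refine Finset.sum_congr rfl fun h' _ => ?_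
              ring
          _ = (H : ℝ) - (h : ℝ) := by rw [hp_sum s o h h1 hlt, mul_one]
      refine ⟨?_, hVub⟩
      rw [hVt_rec s h h1 hlt]
      refine le_min hVub ?_
      -- image set bounded above by (H - h - 1) but H suffices? use H
      set f : (S → ℕ → ℝ) → ℝ :=
        fun q => ∑ s', ∑ h' ∈ Finset.Icc (h+1) H, q s' h' * Vt s' h' with hf
      have himg_bdd : BddAbove (f '' Bp s o h) := by
        refine ⟨(H : ℝ), ?_⟩
        rintro x ⟨q, hq, rfl⟩
        obtain ⟨hqnn, hqsum⟩ := hBp_prob s o h h1 hlt q hq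
        have : f q ≤ ∑ s', ∑ h' ∈ Finset.Icc (h+1) H, q s' h' * (H : ℝ) := by
          refine Finset.sum_le_sum fun s' _ => Finset.sum_le_sum fun h' hh' => ?_
          obtain ⟨hA, hB, _⟩ := hmem h' hh'
          refine mul_le_mul_of_nonneg_left ?_ (hqnn s' h' hh')
          have := hVt_ub s' h' hA hB
          have : Vt s' h' ≤ (H : ℝ) - (h' : ℝ) := this
          have hnn : (0 : ℝ) ≤ (h' : ℝ) := Nat.cast_nonneg _
          linarith
        calc f q ≤ ∑ s', ∑ h' ∈ Finset.Icc (h+1) H, q s' h' * (H : ℝ) := this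
          _ = (∑ s', ∑ h' ∈ Finset.Icc (h+1) H, q s' h') * (H : ℝ) := by
              rw [Finset.sum_mul]
              exact Finset.sum_congr rfl fun s' _ => by rw [Finset.sum_mul]
          _ = (H : ℝ) := by rw [hqsum, one_mul]
      have hsum_le : ∑ s', ∑ h' ∈ Finset.Icc (h+1) H, p s' h' s o h * V s' h'
          ≤ f (fun s' h' => p s' h' s o h) := by
        refine Finset.sum_le_sum fun s' _ => Finset.sum_le_sum fun h' hh' => ?_
        obtain ⟨hA, hB, hC⟩ := hmem h' hh'
        exact mul_le_mul_of_nonneg_left ((ih h' s' hA hB hC).1)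
          (hp_nonneg s o h h1 hlt s' h' hh')
      have hr_le : r s o h ≤ sSup (Br s o h) :=
        le_csSup (hBr_bdd s o h h1 hlt) (hBr_mem s o h h1 hlt)
      have hsup_le : f (fun s' h' => p s' h' s o h) ≤ sSup (f '' Bp s o h) :=
        le_csSup himg_bdd ⟨_, hBp_mem s o h h1 hlt, rfl⟩
      have hstep : V s h ≤ sSup (Br s o h) + sSup (f '' Bp s o h) := by
        rw [hV_rec s h h1 hlt]
        exact add_le_add hr_le (hsum_le.trans hsup_le)
      refine hstep.trans (le_ciSup (f := fun o' : O =>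
        sSup (Br s o' h) + sSup (f '' Bp s o' h)) ((Set.finite_range _).bddAbove) o)
  intro s h h1 hle
  exact (key H h s h1 hle (by omega)).1
end

section
/- Square-root pigeonhole lemma for visit probabilities: Let K ≥ 1 and let a₁,…,a_K be real numbers with 0 ≤ a_k ≤ 1 for all k. Set A_k = ∑_{j=1}^{k} a_j (with A₀ = 0). Then ∑_{k=1}^{K} a_k / √(max(1, A_{k−1})) ≤ 2 + 3·√(A_K). -/
open Finset

lemma sqrt_pigeonhole_aux (b c : ℝ) (hb : 0 ≤ b) (hc0 : 0 ≤ c) (hc1 : c ≤ 1) :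
    c / Real.sqrt (max 1 b) ≤
      2 * Real.sqrt 2 * (Real.sqrt (b + c) - Real.sqrt b) := by
  set M : ℝ := max 1 b with hM
  have hM1 : (1 : ℝ) ≤ M := le_max_left _ _
  have hMb : b ≤ M := le_max_right _ _
  have hMpos : 0 < M := lt_of_lt_of_le one_pos hM1
  have hsM : 0 < Real.sqrt M := Real.sqrt_pos.2 hMpos
  rcases eq_or_lt_of_le hc0 with h0 | hcpos
  · simp [← h0]
  have hbc : 0 < b + c := by linarith
  have hsbc : 0 < Real.sqrt (b + c) := Real.sqrt_pos.2 hbc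
  have hden : 0 < Real.sqrt (b + c) + Real.sqrt b := by positivity
  have hdiff : Real.sqrt (b + c) - Real.sqrt b = c / (Real.sqrt (b + c) + Real.sqrt b) := by
    rw [eq_div_iff (ne_of_gt hden)]
    have h1 : Real.sqrt (b + c) * Real.sqrt (b + c) = b + c :=
      Real.mul_self_sqrt (le_of_lt hbc)
    have h2 : Real.sqrt b * Real.sqrt b = b := Real.mul_self_sqrt hb
    ring_nf
    nlinarith [h1, h2]
  rw [hdiff]
  -- reduce to √(b+c) + √b ≤ 2√2 √M
  have hkey : Real.sqrt (b + c) + Real.sqrt b ≤ 2 * Real.sqrt 2 * Real.sqrt M := by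
    have h1 : Real.sqrt (b + c) ≤ Real.sqrt 2 * Real.sqrt M := by
      rw [← Real.sqrt_mul (by norm_num : (0:ℝ) ≤ 2)]
      apply Real.sqrt_le_sqrt
      nlinarith
    have h2 : Real.sqrt b ≤ Real.sqrt 2 * Real.sqrt M := by
      have : Real.sqrt b ≤ Real.sqrt M := Real.sqrt_le_sqrt hMb
      have hs2 : (1 : ℝ) ≤ Real.sqrt 2 := by
        rw [show (1:ℝ) = Real.sqrt 1 by simp]
        exact Real.sqrt_le_sqrt (by norm_num)
      nlinarith [Real.sqrt_nonneg M]
    linarith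
  have hrw : 2 * Real.sqrt 2 * (c / (Real.sqrt (b + c) + Real.sqrt b))
      = (2 * Real.sqrt 2 * c) / (Real.sqrt (b + c) + Real.sqrt b) := by ring
  rw [hrw, div_le_div_iff₀ hsM hden]
  nlinarith [mul_le_mul_of_nonneg_left hkey (le_of_lt hcpos)]

/-- **Square-root pigeonhole lemma for visit probabilities.**
If `0 ≤ a k ≤ 1` for `k = 1, …, K` and `A k = ∑_{j=1}^{k} a j`, then
`∑_{k=1}^{K} a k / √(max 1 (A (k−1))) ≤ 2 + 3·√(A K)`.
(Note `A 0 = 0` since the sum over `Icc 1 0` is empty.) -/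
theorem sqrt_pigeonhole_visit_probabilities
    (K : ℕ) (hK : 1 ≤ K) (a : ℕ → ℝ)
    (ha : ∀ k ∈ Finset.Icc 1 K, 0 ≤ a k ∧ a k ≤ 1) :
    ∑ k ∈ Finset.Icc 1 K,
        a k / Real.sqrt (max 1 (∑ j ∈ Finset.Icc 1 (k - 1), a j))
      ≤ 2 + 3 * Real.sqrt (∑ j ∈ Finset.Icc 1 K, a j) := by
  set F : ℕ → ℝ := fun n => Real.sqrt (∑ j ∈ Finset.Icc 1 n, a j) with hF
  have hstep : ∀ k ∈ Finset.Icc 1 K,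
      a k / Real.sqrt (max 1 (∑ j ∈ Finset.Icc 1 (k - 1), a j))
        ≤ 2 * Real.sqrt 2 * (F k - F (k - 1)) := by
    intro k hk
    rw [Finset.mem_Icc] at hk
    obtain ⟨hk1, hkK⟩ := hk
    have hsplit : ∑ j ∈ Finset.Icc 1 k, a j
        = (∑ j ∈ Finset.Icc 1 (k - 1), a j) + a k := by
      have : k = (k - 1) + 1 := (Nat.succ_pred_eq_of_pos hk1).symm
      rw [this, Finset.sum_Icc_succ_top (by omega : 1 ≤ k - 1 + 1)]
      simp
    have hb : 0 ≤ ∑ j ∈ Finset.Icc 1 (k - 1), a j := by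
      apply Finset.sum_nonneg
      intro j hj
      rw [Finset.mem_Icc] at hj
      exact (ha j (Finset.mem_Icc.2 ⟨hj.1, by omega⟩)).1
    have hak := ha k (Finset.mem_Icc.2 ⟨hk1, hkK⟩)
    have := sqrt_pigeonhole_aux (∑ j ∈ Finset.Icc 1 (k - 1), a j) (a k) hb hak.1 hak.2
    simpa [hF, hsplit] using this
  calc ∑ k ∈ Finset.Icc 1 K,
          a k / Real.sqrt (max 1 (∑ j ∈ Finset.Icc 1 (k - 1), a j))
      ≤ ∑ k ∈ Finset.Icc 1 K, 2 * Real.sqrt 2 * (F k - F (k - 1)) :=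
        Finset.sum_le_sum hstep
    _ = 2 * Real.sqrt 2 * ∑ k ∈ Finset.Icc 1 K, (F k - F (k - 1)) := by
        rw [Finset.mul_sum]
    _ = 2 * Real.sqrt 2 * (F K - F 0) := by
        congr 1
        rw [← Finset.Ico_add_one_right_eq_Icc, Finset.sum_Ico_eq_sum_range]
        have : ∀ i ∈ Finset.range (K + 1 - 1), F (1 + i) - F (1 + i - 1)
            = F (i + 1) - F i := by
          intro i _
          congr 2 <;> omega
        rw [Finset.sum_congr rfl this, Finset.sum_range_sub]
        norm_num
    _ ≤ 2 + 3 * Real.sqrt (∑ j ∈ Finset.Icc 1 K, a j) := by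
        have hF0 : F 0 = 0 := by simp [hF]
        have hFK : 0 ≤ F K := Real.sqrt_nonneg _
        have hs2 : Real.sqrt 2 ≤ 3 / 2 := by
          rw [show (3:ℝ)/2 = Real.sqrt ((3/2)^2) by
            rw [Real.sqrt_sq (by norm_num)]]
          exact Real.sqrt_le_sqrt (by norm_num)
        have : 2 * Real.sqrt 2 * (F K - F 0) ≤ 3 * F K := by
          rw [hF0, sub_zero]
          nlinarith [Real.sqrt_nonneg (2:ℝ)]
        calc 2 * Real.sqrt 2 * (F K - F 0) ≤ 3 * F K := this
          _ ≤ 2 + 3 * Real.sqrt (∑ j ∈ Finset.Icc 1 K, a j) := by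
              simp only [hF]; linarith [Real.sqrt_nonneg (∑ j ∈ Finset.Icc 1 K, a j)]
end

section
/- Logarithmic pigeonhole lemma for visit probabilities: Let K ≥ 1 and let a₁,…,a_K be real numbers with 0 ≤ a_k ≤ 1 for all k. Set A_k = ∑_{j=1}^{k} a_j (with A₀ = 0). Then ∑_{k=1}^{K} a_k / max(1, A_{k−1}) ≤ 2 + 2·ln(max(1, A_K)). -/
open Finset

lemma half_le_log_one_add {x : ℝ} (hx0 : 0 ≤ x) (hx1 : x ≤ 1) :
    x / 2 ≤ Real.log (1 + x) := by
  have hpos : (0:ℝ) < 1 + x := by linarith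
  rw [Real.le_log_iff_exp_le hpos]
  have h1 : (-(x/2)) + 1 ≤ Real.exp (-(x/2)) := Real.add_one_le_exp _
  have h2 : (0:ℝ) < 1 - x/2 := by linarith
  have h3 : Real.exp (x/2) ≤ (1 - x/2)⁻¹ := by
    rw [show Real.exp (x/2) = (Real.exp (-(x/2)))⁻¹ by rw [Real.exp_neg, inv_inv]]
    exact inv_anti₀ h2 (by linarith)
  have h4 : (1 - x/2)⁻¹ ≤ 1 + x := by
    rw [inv_le_iff_one_le_mul₀ h2]
    nlinarith
  linarith

lemma key_term (b B : ℝ) (hb0 : 0 ≤ b) (hb1 : b ≤ 1) (hB : 0 ≤ B) :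
    b / max 1 B ≤ (min 2 (B + b) - min 2 B)
      + 2 * (Real.log (max 1 (B + b)) - Real.log (max 1 B)) := by
  have hlogmono : Real.log (max 1 B) ≤ Real.log (max 1 (B + b)) := by
    apply Real.log_le_log (by positivity)
    exact max_le_max le_rfl (by linarith)
  rcases le_or_gt 1 B with h1B | h1B
  · have hmax : max 1 B = B := max_eq_right h1B
    have hmax' : max 1 (B + b) = B + b := max_eq_right (by linarith)
    have hBpos : (0:ℝ) < B := by linarith
    have hmin : min 2 B ≤ min 2 (B + b) := min_le_min le_rfl (by linarith)
    have hx0 : 0 ≤ b / B := by positivity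
    have hx1 : b / B ≤ 1 := by rw [div_le_one hBpos]; linarith
    have := half_le_log_one_add hx0 hx1
    have hlog : Real.log (1 + b / B) = Real.log (B + b) - Real.log B := by
      rw [← Real.log_div (by positivity) (ne_of_gt hBpos)]
      congr 1
      field_simp
    rw [hmax, hmax']
    rw [hlog] at this
    linarith
  · have hmax : max 1 B = 1 := max_eq_left (le_of_lt h1B)
    have hmin1 : min 2 B = B := min_eq_right (by linarith)
    have hmin2 : min 2 (B + b) = B + b := min_eq_right (by linarith)
    rw [hmax] at hlogmono ⊢
    rw [Real.log_one] at hlogmono ⊢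
    rw [hmin1, hmin2, div_one]
    linarith

/-- **Logarithmic pigeonhole lemma for visit probabilities.**
If `0 ≤ a k ≤ 1` for `k = 1, …, K` and `A k = ∑_{j=1}^{k} a j`, then
`∑_{k=1}^{K} a k / max 1 (A (k−1)) ≤ 2 + 2·ln(max 1 (A K))`.
(Note `A 0 = 0` since the sum over `Icc 1 0` is empty.) -/
theorem log_pigeonhole_visit_probabilities
    (K : ℕ) (hK : 1 ≤ K) (a : ℕ → ℝ)
    (ha : ∀ k ∈ Finset.Icc 1 K, 0 ≤ a k ∧ a k ≤ 1) :
    ∑ k ∈ Finset.Icc 1 K,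
        a k / max 1 (∑ j ∈ Finset.Icc 1 (k - 1), a j)
      ≤ 2 + 2 * Real.log (max 1 (∑ j ∈ Finset.Icc 1 K, a j)) := by
  set A : ℕ → ℝ := fun n => ∑ j ∈ Finset.Icc 1 n, a j with hA
  set g : ℕ → ℝ := fun n => min 2 (A n) + 2 * Real.log (max 1 (A n)) with hg
  have hApos : ∀ n ≤ K, 0 ≤ A n := by
    intro n hn
    apply Finset.sum_nonneg
    intro j hj
    exact (ha j (Finset.mem_Icc.mpr ⟨(Finset.mem_Icc.mp hj).1,
      le_trans (Finset.mem_Icc.mp hj).2 hn⟩)).1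
  have hstep : ∀ k ∈ Finset.Icc 1 K, A k = A (k - 1) + a k := by
    intro k hk
    obtain ⟨hk1, hk2⟩ := Finset.mem_Icc.mp hk
    obtain ⟨m, rfl⟩ := Nat.exists_eq_add_of_le hk1
    simp only [hA, Nat.add_sub_cancel_left, add_comm 1 m]
    rw [Finset.sum_Icc_succ_top (Nat.le_add_left 1 m)]
    simp
  have hterm : ∀ k ∈ Finset.Icc 1 K,
      a k / max 1 (A (k - 1)) ≤ g k - g (k - 1) := by
    intro k hk
    obtain ⟨hk1, hk2⟩ := Finset.mem_Icc.mp hk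
    obtain ⟨h0, h1⟩ := ha k hk
    have hB := hApos (k - 1) (le_trans (Nat.sub_le k 1) hk2)
    have := key_term (a k) (A (k - 1)) h0 h1 hB
    rw [← hstep k hk] at this
    simp only [hg]
    linarith
  calc ∑ k ∈ Finset.Icc 1 K, a k / max 1 (A (k - 1))
      ≤ ∑ k ∈ Finset.Icc 1 K, (g k - g (k - 1)) := Finset.sum_le_sum hterm
    _ = g K - g 0 := by
        rw [← Finset.Ico_add_one_right_eq_Icc, Finset.sum_Ico_eq_sum_range]
        simp only [Nat.add_sub_cancel, Nat.succ_sub_one]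
        have : ∀ i, g (1 + i) - g (1 + i - 1) = g (i + 1) - g i := by
          intro i; congr 2 <;> omega
        rw [Finset.sum_congr rfl fun i _ => this i, Finset.sum_range_sub g K]
    _ ≤ 2 + 2 * Real.log (max 1 (A K)) := by
        have hg0 : g 0 = 0 := by simp [hg, hA, Real.log_one]
        rw [hg0, sub_zero]
        simp only [hg]
        have : min 2 (A K) ≤ 2 := min_le_left _ _
        linarith
end

section
/- Aggregated visit-probability bound (deterministic core of the Lemma-16 adaptation for SMDPs): Let I be a finite set with |I| = M ≥ 1, let K ≥ 1, d > 0, and let w : {1,…,K} × I → ℝ satisfy 0 ≤ w(k,i) ≤ 1 for all k, i and ∑_{i∈I} w(k,i) ≤ d for every k. For each i set N_k(i) = ∑_{j=1}^{k} w(j,i) (with N₀(i) = 0). Then ∑_{k=1}^{K} ∑_{i∈I} w(k,i) / √(max(1, N_{k−1}(i))) ≤ 2M + 3·√(M·K·d). -/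
open Finset

private lemma step_ineq (b c : ℝ) (hb : 0 ≤ b) (hc0 : 0 ≤ c) (hc1 : c ≤ 1) :
    c / Real.sqrt (max 1 b)
      ≤ 2 * (min 1 (b + c) - min 1 b)
        + 3 * (Real.sqrt (max 1 (b + c)) - Real.sqrt (max 1 b)) := by
  rcases le_or_gt 1 b with h1 | h1
  · have hbc : (1:ℝ) ≤ b + c := by linarith
    rw [max_eq_right h1, max_eq_right hbc, min_eq_left h1, min_eq_left hbc]
    have hsb : (1:ℝ) ≤ Real.sqrt b := Real.one_le_sqrt.mpr h1
    have hsbpos : 0 < Real.sqrt b := by linarith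
    have hq1 := Real.sq_sqrt (by linarith : (0:ℝ) ≤ b + c)
    have hq2 := Real.sq_sqrt hb
    have hkey : (Real.sqrt (b+c) - Real.sqrt b) * (Real.sqrt (b+c) + Real.sqrt b) = c := by
      nlinarith
    have h2 : Real.sqrt (b + c) ≤ 2 * Real.sqrt b := by
      nlinarith [Real.sqrt_nonneg (b + c), Real.sqrt_nonneg b]
    have hdiff : 0 ≤ Real.sqrt (b + c) - Real.sqrt b := by
      have := Real.sqrt_le_sqrt (by linarith : b ≤ b + c); linarith
    rw [div_le_iff₀ hsbpos]
    nlinarith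
  · have hb1 : b ≤ 1 := le_of_lt h1
    rw [max_eq_left hb1, min_eq_right hb1, Real.sqrt_one, div_one]
    rcases le_or_gt (b + c) 1 with h2 | h2
    · rw [max_eq_left h2, min_eq_right h2, Real.sqrt_one]
      linarith
    · have h2' : (1:ℝ) ≤ b + c := le_of_lt h2
      rw [max_eq_right h2', min_eq_left h2']
      have hx2 : b + c ≤ 2 := by linarith
      have hs1 : (1:ℝ) ≤ Real.sqrt (b + c) := Real.one_le_sqrt.mpr h2'
      have hs2 : Real.sqrt (b + c) ≤ 2 := by
        nlinarith [Real.sq_sqrt (by linarith : (0:ℝ) ≤ b + c), Real.sqrt_nonneg (b + c)]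
      have hq := Real.sq_sqrt (by linarith : (0:ℝ) ≤ b + c)
      nlinarith

private lemma per_sum (K : ℕ) (a : ℕ → ℝ) (h : ∀ k ∈ Finset.Icc 1 K, 0 ≤ a k ∧ a k ≤ 1) :
    ∑ k ∈ Finset.Icc 1 K, a k / Real.sqrt (max 1 (∑ j ∈ Finset.Icc 1 (k - 1), a j))
      ≤ 2 * min 1 (∑ j ∈ Finset.Icc 1 K, a j)
        + 3 * (Real.sqrt (max 1 (∑ j ∈ Finset.Icc 1 K, a j)) - 1) := by
  induction K with
  | zero => simp
  | succ K ih =>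
    have h' : ∀ k ∈ Finset.Icc 1 K, 0 ≤ a k ∧ a k ≤ 1 := by
      intro k hk
      exact h k (Finset.mem_Icc.mpr ⟨(Finset.mem_Icc.mp hk).1, (Finset.mem_Icc.mp hk).2.trans (Nat.le_succ K)⟩)
    have ih' := ih h'
    have hb : 0 ≤ ∑ j ∈ Finset.Icc 1 K, a j :=
      Finset.sum_nonneg fun j hj => (h' j hj).1
    have hc := h (K + 1) (Finset.mem_Icc.mpr ⟨Nat.le_add_left 1 K, le_rfl⟩)
    have hstep := step_ineq (∑ j ∈ Finset.Icc 1 K, a j) (a (K + 1)) hb hc.1 hc.2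
    rw [Finset.sum_Icc_succ_top (Nat.le_add_left 1 K), Finset.sum_Icc_succ_top (Nat.le_add_left 1 K)]
    have hsimp : K + 1 - 1 = K := Nat.succ_sub_one K
    rw [hsimp]
    linarith

private lemma per_sum' (K : ℕ) (a : ℕ → ℝ) (h : ∀ k ∈ Finset.Icc 1 K, 0 ≤ a k ∧ a k ≤ 1) :
    ∑ k ∈ Finset.Icc 1 K, a k / Real.sqrt (max 1 (∑ j ∈ Finset.Icc 1 (k - 1), a j))
      ≤ 2 + 3 * Real.sqrt (∑ j ∈ Finset.Icc 1 K, a j) := by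
  refine (per_sum K a h).trans ?_
  set N := ∑ j ∈ Finset.Icc 1 K, a j with hN
  have hN0 : 0 ≤ N := Finset.sum_nonneg fun j hj => (h j hj).1
  have hs : 0 ≤ Real.sqrt N := Real.sqrt_nonneg N
  rcases le_or_gt N 1 with h1 | h1
  · rw [max_eq_left h1, Real.sqrt_one]
    have : min 1 N = N := min_eq_right h1
    rw [this]; linarith
  · rw [max_eq_right (le_of_lt h1), min_eq_left (le_of_lt h1)]
    linarith

/-- **Aggregated visit-probability bound** (deterministic core of the adaptation of
Lemma 16 of Zanette–Brunskill to SMDPs).  `I` is a finite set of `M ≥ 1`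
state–option–stage triples, `w k i` is the visit probability of triple `i` in
episode `k` (summing to at most `d` over `i`), and
`N_{k-1}(i) = ∑_{j=1}^{k-1} w j i` plays the role of the expected visit count. -/
theorem aggregated_visit_probability_bound_SMDP
    {I : Type*} [Fintype I] [Nonempty I]
    (K : ℕ) (hK : 1 ≤ K) (d : ℝ) (hd : 0 < d)
    (w : ℕ → I → ℝ)
    (hw01 : ∀ k ∈ Finset.Icc 1 K, ∀ i, 0 ≤ w k i ∧ w k i ≤ 1)
    (hwd : ∀ k ∈ Finset.Icc 1 K, ∑ i, w k i ≤ d) :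
    ∑ k ∈ Finset.Icc 1 K, ∑ i,
        w k i / Real.sqrt (max 1 (∑ j ∈ Finset.Icc 1 (k - 1), w j i))
      ≤ 2 * (Fintype.card I : ℝ)
        + 3 * Real.sqrt ((Fintype.card I : ℝ) * (K : ℝ) * d) := by
  set M := (Fintype.card I : ℝ) with hM
  rw [Finset.sum_comm]
  have step1 : ∑ i : I, ∑ k ∈ Finset.Icc 1 K,
      w k i / Real.sqrt (max 1 (∑ j ∈ Finset.Icc 1 (k - 1), w j i))
      ≤ ∑ i : I, (2 + 3 * Real.sqrt (∑ j ∈ Finset.Icc 1 K, w j i)) := by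
    refine Finset.sum_le_sum fun i _ => ?_
    exact per_sum' K (fun k => w k i) (fun k hk => hw01 k hk i)
  refine step1.trans ?_
  rw [Finset.sum_add_distrib, Finset.sum_const, ← Finset.mul_sum]
  have hcard : ((Finset.univ : Finset I).card : ℝ) = M := by simp [hM]
  have hsum : ∑ i : I, ∑ j ∈ Finset.Icc 1 K, w j i ≤ K * d := by
    rw [Finset.sum_comm]
    calc ∑ j ∈ Finset.Icc 1 K, ∑ i : I, w j i
        ≤ ∑ j ∈ Finset.Icc 1 K, d := Finset.sum_le_sum fun j hj => hwd j hj
      _ = (Finset.Icc 1 K).card * d := by rw [Finset.sum_const, nsmul_eq_mul]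
      _ = K * d := by rw [Nat.card_Icc]; simp
  have hMpos : (0:ℝ) < M := by
    rw [hM]; exact_mod_cast Fintype.card_pos
  have hsqrtsum : ∑ i : I, Real.sqrt (∑ j ∈ Finset.Icc 1 K, w j i)
      ≤ Real.sqrt (M * (K * d)) := by
    have hnn : ∀ i : I, 0 ≤ ∑ j ∈ Finset.Icc 1 K, w j i := fun i =>
      Finset.sum_nonneg fun j hj => (hw01 j hj i).1
    have hcs := sq_sum_le_card_mul_sum_sq
      (s := (Finset.univ : Finset I)) (f := fun i => Real.sqrt (∑ j ∈ Finset.Icc 1 K, w j i))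
    have hsq : ∀ i : I, Real.sqrt (∑ j ∈ Finset.Icc 1 K, w j i) ^ 2
        = ∑ j ∈ Finset.Icc 1 K, w j i := fun i => Real.sq_sqrt (hnn i)
    have hnn2 : 0 ≤ ∑ i : I, Real.sqrt (∑ j ∈ Finset.Icc 1 K, w j i) :=
      Finset.sum_nonneg fun i _ => Real.sqrt_nonneg _
    rw [← Real.sqrt_sq hnn2]
    apply Real.sqrt_le_sqrt
    calc (∑ i : I, Real.sqrt (∑ j ∈ Finset.Icc 1 K, w j i)) ^ 2
        ≤ ((Finset.univ : Finset I).card : ℝ)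
            * ∑ i : I, Real.sqrt (∑ j ∈ Finset.Icc 1 K, w j i) ^ 2 := hcs
      _ = M * ∑ i : I, ∑ j ∈ Finset.Icc 1 K, w j i := by
          rw [hcard]; congr 1; exact Finset.sum_congr rfl fun i _ => hsq i
      _ ≤ M * (K * d) := by
          exact mul_le_mul_of_nonneg_left hsum (le_of_lt hMpos)
  have : Real.sqrt (M * (K * d)) = Real.sqrt (M * K * d) := by ring_nf
  rw [this] at hsqrtsum
  simp only [nsmul_eq_mul] at *
  rw [hcard]
  linarith [hsqrtsum]
end
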